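/- arXiv:2207.11419 — 2 statements merged into one kernel-verified Lean document; each statement's English description precedes it below -/
import Mathlib

section
/- For every α ∈ [0,1] and every p with 1 < p < ∞, the Bishop operator T_α on L^p([0,1]) is not supercyclic; that is, there is no f ∈ L^p([0,1]) such that the set {λ·T_α^n f : λ ∈ ℂ, n ≥ 0} is dense in L^p([0,1]). -/
open MeasureTheory Set Filter Topology Polynomial
open scoped ENNReal NNReal

/-- Lebesgue measure restricted to `[0,1]`. -/
noncomputable def μ01 : Measure ℝ := volume.restrict (Set.Icc 0 1)

lemma mu01_apply (E : Set ℝ) : μ01 E = volume (E ∩ Set.Icc 0 1) :=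
  Measure.restrict_apply' measurableSet_Icc




instance : IsProbabilityMeasure μ01 := by
  constructor
  rw [mu01_apply, Set.univ_inter, Real.volume_Icc]
  norm_num

lemma ae_Ico : ∀ᵐ x ∂μ01, x ∈ Set.Ico (0:ℝ) 1 := by
  rw [ae_iff, mu01_apply]
  have : {x : ℝ | ¬ x ∈ Set.Ico (0:ℝ) 1} ∩ Set.Icc 0 1 = {1} := by
    ext x
    simp only [Set.mem_inter_iff, Set.mem_setOf_eq, Set.mem_Ico, Set.mem_Icc,
      Set.mem_singleton_iff, not_and, not_lt]
    constructor
    · rintro ⟨h1, h2, h3⟩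
      rcases lt_or_ge x 1 with h | h
      · linarith [h1 h2]
      · linarith
    · rintro rfl; norm_num
  rw [this, Real.volume_singleton]

lemma fract_fract_add (a b : ℝ) : Int.fract (Int.fract a + b) = Int.fract (a + b) := by
  have h : Int.fract a + b = a + b - (⌊a⌋ : ℤ) := by
    rw [Int.fract]; push_cast; ring
  rw [h, Int.fract_sub_intCast]




-- translation bound for arbitrary sets
lemma vol_preimage_add (c : ℝ) (E : Set ℝ) :
    volume ((fun x : ℝ => x + c) ⁻¹' E) = volume E := by
  have : (fun x : ℝ => x + c) = (fun x : ℝ => c + x) := by funext x; ring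
  rw [this]
  exact measure_preimage_add volume c E

/-- pullback of a set under `x ↦ fract (x+θ)` does not increase `μ01`-measure. -/
lemma pullback (θ : ℝ) (E : Set ℝ) :
    μ01 ((fun x => Int.fract (x + θ)) ⁻¹' E) ≤ μ01 E := by
  classical
  set β := Int.fract θ with hβ
  have hβ0 : 0 ≤ β := Int.fract_nonneg θ
  have hβ1 : β < 1 := Int.fract_lt_one θ
  have hfr : ∀ x : ℝ, Int.fract (x + θ) = Int.fract (x + β) := by
    intro x
    have : x + θ = (x + β) + (⌊θ⌋ : ℤ) := by rw [hβ, Int.fract]; push_cast; ring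
    rw [this, Int.fract_add_intCast]
  -- the two pieces
  have key : ((fun x => Int.fract (x + θ)) ⁻¹' E) ∩ Set.Icc 0 1 ⊆
      ((fun x : ℝ => x + β) ⁻¹' (E ∩ Set.Ico β 1)) ∪
      ((fun x : ℝ => x + (β - 1)) ⁻¹' (E ∩ Set.Ico 0 β)) ∪ {1} := by
    rintro x ⟨hxE, hx0, hx1⟩
    simp only [Set.mem_preimage] at hxE
    rw [hfr] at hxE
    rcases eq_or_lt_of_le hx1 with h1 | h1
    · right; exact h1
    left
    rcases lt_or_ge x (1 - β) with h | h
    · left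
      have hself : Int.fract (x + β) = x + β := by
        rw [Int.fract_eq_self]; constructor <;> linarith
      rw [hself] at hxE
      simp only [Set.mem_preimage, Set.mem_inter_iff, Set.mem_Ico]
      exact ⟨hxE, by linarith, by linarith⟩
    · right
      have hself : Int.fract (x + β) = x + β - 1 := by
        have h2 : Int.fract (x + β - (1:ℤ)) = Int.fract (x + β) := Int.fract_sub_intCast _ _
        rw [← h2]
        push_cast
        rw [Int.fract_eq_self]
        constructor <;> linarith
      rw [hself] at hxE
      simp only [Set.mem_preimage, Set.mem_inter_iff, Set.mem_Ico]
      refine ⟨by convert hxE using 1; ring, by linarith, by linarith⟩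
  calc μ01 ((fun x => Int.fract (x + θ)) ⁻¹' E)
      = volume (((fun x => Int.fract (x + θ)) ⁻¹' E) ∩ Set.Icc 0 1) := mu01_apply _
    _ ≤ volume (((fun x : ℝ => x + β) ⁻¹' (E ∩ Set.Ico β 1)) ∪
        ((fun x : ℝ => x + (β - 1)) ⁻¹' (E ∩ Set.Ico 0 β)) ∪ {1}) := measure_mono key
    _ ≤ volume ((fun x : ℝ => x + β) ⁻¹' (E ∩ Set.Ico β 1)) +
        volume ((fun x : ℝ => x + (β - 1)) ⁻¹' (E ∩ Set.Ico 0 β)) + volume ({1} : Set ℝ) :=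
        le_trans (measure_union_le _ _) (by gcongr; exact measure_union_le _ _)
    _ = volume (E ∩ Set.Ico β 1) + volume (E ∩ Set.Ico 0 β) + 0 := by
        rw [vol_preimage_add, vol_preimage_add, Real.volume_singleton]
    _ = volume (E ∩ Set.Ico 0 β) + volume (E ∩ Set.Ico β 1) := by ring
    _ = volume (E ∩ Set.Ico 0 1) := by
        have h1 : E ∩ Set.Ico 0 β = (E ∩ Set.Ico 0 1) ∩ Set.Iio β := by
          ext x; simp only [Set.mem_inter_iff, Set.mem_Ico, Set.mem_Iio]
          constructor
          · rintro ⟨h, h2, h3⟩; exact ⟨⟨h, h2, by linarith⟩, h3⟩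
          · rintro ⟨⟨h, h2, h3⟩, h4⟩; exact ⟨h, h2, h4⟩
        have h2 : E ∩ Set.Ico β 1 = (E ∩ Set.Ico 0 1) \ Set.Iio β := by
          ext x; simp only [Set.mem_inter_iff, Set.mem_Ico, Set.mem_diff, Set.mem_Iio, not_lt]
          constructor
          · rintro ⟨h, h2, h3⟩; exact ⟨⟨h, by linarith, h3⟩, h2⟩
          · rintro ⟨⟨h, h2, h3⟩, h4⟩; exact ⟨h, h4, h3⟩
        rw [h1, h2, measure_inter_add_diff _ measurableSet_Iio]
    _ ≤ volume (E ∩ Set.Icc 0 1) := by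
        apply measure_mono; apply Set.inter_subset_inter_right; exact Set.Ico_subset_Icc_self
    _ = μ01 E := (mu01_apply _).symm

lemma pullback_null (θ : ℝ) {E : Set ℝ} (hE : μ01 E = 0) :
    μ01 ((fun x => Int.fract (x + θ)) ⁻¹' E) = 0 :=
  le_antisymm (hE ▸ pullback θ E) zero_le


-- diameter bound
lemma diam_bound {ℓ : ℝ} (hl : 0 ≤ ℓ) (S : Set ℝ)
    (h : ∀ x ∈ S, ∀ y ∈ S, x < y → y - x ≤ ℓ) :
    volume S ≤ ENNReal.ofReal (2 * ℓ) := by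
  rcases Set.eq_empty_or_nonempty S with rfl | ⟨x₀, hx₀⟩
  · simp
  have hsub : S ⊆ Set.Icc (x₀ - ℓ) (x₀ + ℓ) := by
    intro y hy
    rcases lt_trichotomy y x₀ with hc | hc | hc
    · have := h y hy x₀ hx₀ hc; constructor <;> linarith
    · subst hc; constructor <;> linarith
    · have := h x₀ hx₀ y hy hc; constructor <;> linarith
  calc volume S ≤ volume (Set.Icc (x₀ - ℓ) (x₀ + ℓ)) := measure_mono hsub
    _ = ENNReal.ofReal (2 * ℓ) := by rw [Real.volume_Icc]; ring_nf

lemma cover_lemma {ℓ : ℝ} (hl : 0 ≤ ℓ) (D : Finset ℝ) :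
    ∀ S : Set ℝ,
    (∀ x ∈ S, ∀ y ∈ S, x < y → Set.Ioo x y ∩ (D : Set ℝ) = ∅ → y - x ≤ ℓ) →
    volume S ≤ (D.card + 1) * ENNReal.ofReal (2 * ℓ) := by
  classical
  induction D using Finset.induction_on_max with
  | empty =>
    intro S hS
    simp only [Finset.card_empty, Nat.cast_zero, zero_add, one_mul]
    exact diam_bound hl S (fun x hx y hy hxy => hS x hx y hy hxy (by simp))
  | insert a D ha IH =>
    intro S hS
    have hsplit : S = (S ∩ Set.Iic a) ∪ (S ∩ Set.Ioi a) := by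
      ext x; simp only [Set.mem_union, Set.mem_inter_iff, Set.mem_Iic, Set.mem_Ioi]
      constructor
      · intro hx; rcases le_or_gt x a with h | h
        · exact Or.inl ⟨hx, h⟩
        · exact Or.inr ⟨hx, h⟩
      · rintro (⟨hx, _⟩ | ⟨hx, _⟩) <;> exact hx
    have h1 : volume (S ∩ Set.Iic a) ≤ (D.card + 1) * ENNReal.ofReal (2 * ℓ) := by
      apply IH
      rintro x ⟨hxS, hxa⟩ y ⟨hyS, hya⟩ hxy hIoo
      apply hS x hxS y hyS hxy
      ext z
      simp only [Set.mem_inter_iff, Set.mem_Ioo, Finset.coe_insert, Set.mem_insert_iff,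
        Set.mem_empty_iff_false, iff_false, not_and]
      rintro ⟨hz1, hz2⟩ (rfl | hzD)
      · exact absurd hya (not_le.mpr hz2)
      · have : z ∈ Set.Ioo x y ∩ (D : Set ℝ) := ⟨⟨hz1, hz2⟩, hzD⟩
        rw [hIoo] at this; exact this
    have h2 : volume (S ∩ Set.Ioi a) ≤ ENNReal.ofReal (2 * ℓ) := by
      apply diam_bound hl
      rintro x ⟨hxS, hxa⟩ y ⟨hyS, hya⟩ hxy
      apply hS x hxS y hyS hxy
      ext z
      simp only [Set.mem_inter_iff, Set.mem_Ioo, Finset.coe_insert, Set.mem_insert_iff,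
        Set.mem_empty_iff_false, iff_false, not_and]
      rintro ⟨hz1, hz2⟩ (rfl | hzD)
      · exact absurd (lt_trans (Set.mem_Ioi.mp hxa) hz1) (lt_irrefl z)
      · exact absurd (lt_trans (ha z hzD) (lt_trans (Set.mem_Ioi.mp hxa) hz1)) (lt_irrefl z)
    have hcard : a ∉ D := fun hmem => lt_irrefl a (ha a hmem)
    calc volume S ≤ volume (S ∩ Set.Iic a) + volume (S ∩ Set.Ioi a) := by
          conv_lhs => rw [hsplit]
          exact measure_union_le _ _
      _ ≤ (D.card + 1) * ENNReal.ofReal (2 * ℓ) + ENNReal.ofReal (2 * ℓ) := add_le_add h1 h2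
      _ = ((insert a D).card + 1) * ENNReal.ofReal (2 * ℓ) := by
          rw [Finset.card_insert_of_notMem hcard]
          push_cast
          ring



noncomputable def Wprod (α : ℝ) (N : ℕ) (x : ℝ) : ℝ :=
  ∏ k ∈ Finset.range N, Int.fract (x + k * α)

noncomputable def tauN (α : ℝ) (N : ℕ) (x : ℝ) : ℝ := Int.fract (x + N * α)

lemma Wprod_nonneg (α : ℝ) (N : ℕ) (x : ℝ) : 0 ≤ Wprod α N x :=
  Finset.prod_nonneg fun k _ => Int.fract_nonneg _


lemma Wprod_add (α : ℝ) (N n : ℕ) (x : ℝ) :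
    Wprod α (N + n) x = Wprod α N x * Wprod α n (tauN α N x) := by
  unfold Wprod tauN
  rw [Finset.prod_range_add]
  congr 1
  apply Finset.prod_congr rfl
  intro k _
  rw [fract_fract_add]
  push_cast
  ring_nf

lemma tauN_comp (α : ℝ) (N n : ℕ) (x : ℝ) :
    tauN α n (tauN α N x) = tauN α (N + n) x := by
  unfold tauN
  rw [fract_fract_add]
  push_cast
  ring_nf

/-- The band lemma: the weight product is within a multiplicative band `[A,B]`
only on a set of measure at most `(N+1) * 2 * (log B - log A)/N`. -/
lemma band_lemma (α : ℝ) (N : ℕ) (hN : 1 ≤ N) {A B : ℝ} (hA : 0 < A) (hAB : A ≤ B) :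
    volume {x : ℝ | x ∈ Set.Ioo (0:ℝ) 1 ∧ A ≤ Wprod α N x ∧ Wprod α N x ≤ B} ≤
      (N + 1) * ENNReal.ofReal (2 * ((Real.log B - Real.log A) / N)) := by
  classical
  set ℓ : ℝ := (Real.log B - Real.log A) / N with hℓdef
  have hlogAB : Real.log A ≤ Real.log B := Real.log_le_log hA hAB
  have hl : 0 ≤ ℓ := by
    apply div_nonneg (by linarith) (by positivity)
  set D : Finset ℝ := (Finset.range N).image (fun k : ℕ => 1 - Int.fract ((k:ℝ) * α)) with hD
  have hcard : (D.card : ℝ≥0∞) ≤ N := by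
    have h1 : D.card ≤ N := by
      rw [hD]
      exact le_trans Finset.card_image_le (le_of_eq (Finset.card_range N))
    exact_mod_cast Nat.cast_le.mpr h1
  set S : Set ℝ := {x : ℝ | x ∈ Set.Ioo (0:ℝ) 1 ∧ A ≤ Wprod α N x ∧ Wprod α N x ≤ B} with hS
  -- each factor is positive on S
  have hfacpos : ∀ x ∈ S, ∀ k ∈ Finset.range N, 0 < Int.fract (x + k * α) := by
    rintro x ⟨hx01, hxA, hxB⟩ k hk
    rcases eq_or_lt_of_le (Int.fract_nonneg (x + k * α)) with h | h
    · exfalso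
      have : Wprod α N x = 0 := Finset.prod_eq_zero hk h.symm
      rw [this] at hxA; linarith
    · exact h
  have key : ∀ x ∈ S, ∀ y ∈ S, x < y → Set.Ioo x y ∩ (D : Set ℝ) = ∅ → y - x ≤ ℓ := by
    intro x hxS y hyS hxy hIoo
    -- each factor shifts exactly
    have hfac : ∀ k ∈ Finset.range N,
        Int.fract (y + k * α) = Int.fract (x + k * α) + (y - x) ∧ Int.fract (y + k * α) < 1 := by
      intro k hk
      have hd : (1 - Int.fract (k * α)) ∉ Set.Ioo x y := by
        intro hmem
        have : (1 - Int.fract (k * α)) ∈ Set.Ioo x y ∩ (D : Set ℝ) := by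
          refine ⟨hmem, ?_⟩
          simp only [hD, Finset.coe_image, Set.mem_image, Finset.mem_coe, Finset.mem_range]
          exact ⟨k, Finset.mem_range.mp hk, rfl⟩
        rw [hIoo] at this; exact this
      set β := Int.fract (k * α) with hβ
      have hβ0 : 0 ≤ β := Int.fract_nonneg _
      have hβ1 : β < 1 := Int.fract_lt_one _
      have hx01 := hxS.1
      have hy01 := hyS.1
      have hxf : Int.fract (x + k * α) = Int.fract (x + β) := by
        have : x + k * α = (x + β) + (⌊(k:ℝ) * α⌋ : ℤ) := by rw [hβ, Int.fract]; ring
        rw [this, Int.fract_add_intCast]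
      have hyf : Int.fract (y + k * α) = Int.fract (y + β) := by
        have : y + k * α = (y + β) + (⌊(k:ℝ) * α⌋ : ℤ) := by rw [hβ, Int.fract]; ring
        rw [this, Int.fract_add_intCast]
      have hxpos : 0 < Int.fract (x + k * α) := hfacpos x hxS k hk
      have hypos : 0 < Int.fract (y + k * α) := hfacpos y hyS k hk
      -- trichotomy on the breakpoint d = 1 - β
      have hne : ¬ (x < 1 - β ∧ 1 - β < y) := fun hc => hd ⟨hc.1, hc.2⟩
      rcases not_and_or.mp hne with hcase | hcase
      · -- 1 - β ≤ x : both on upper branch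
        push_neg at hcase
        have hxne : x ≠ 1 - β := by
          intro hc
          rw [hxf, hc] at hxpos
          rw [show (1:ℝ) - β + β = 1 by ring] at hxpos
          norm_num [Int.fract_one] at hxpos
        have hxlt : 1 - β < x := lt_of_le_of_ne hcase (Ne.symm hxne)
        have hxval : Int.fract (x + β) = x + β - 1 := by
          have h2 : Int.fract (x + β - (1:ℤ)) = Int.fract (x + β) := Int.fract_sub_intCast _ _
          rw [← h2]; push_cast
          rw [Int.fract_eq_self]
          constructor
          · linarith [hx01.1]
          · linarith [hx01.2]
        have hyval : Int.fract (y + β) = y + β - 1 := by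
          have h2 : Int.fract (y + β - (1:ℤ)) = Int.fract (y + β) := Int.fract_sub_intCast _ _
          rw [← h2]; push_cast
          rw [Int.fract_eq_self]
          constructor
          · linarith [hy01.1]
          · linarith [hy01.2]
        rw [hxf, hyf, hxval, hyval]
        constructor
        · ring
        · linarith [hy01.2]
      · -- y ≤ 1 - β : both on lower branch
        push_neg at hcase
        have hyne : y ≠ 1 - β := by
          intro hc
          rw [hyf, hc] at hypos
          rw [show (1:ℝ) - β + β = 1 by ring] at hypos
          norm_num [Int.fract_one] at hypos
        have hylt : y < 1 - β := lt_of_le_of_ne hcase hyne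
        have hxval : Int.fract (x + β) = x + β :=
          Int.fract_eq_self.mpr ⟨by linarith [hx01.1], by linarith⟩
        have hyval : Int.fract (y + β) = y + β :=
          Int.fract_eq_self.mpr ⟨by linarith [hy01.1], by linarith⟩
        rw [hxf, hyf, hxval, hyval]
        constructor
        · ring
        · linarith
    -- per-factor log increment
    have hlogfac : ∀ k ∈ Finset.range N,
        Real.log (Int.fract (x + k * α)) + (y - x) ≤ Real.log (Int.fract (y + k * α)) := by
      intro k hk
      obtain ⟨heq, hlt1⟩ := hfac k hk
      have hu : 0 < Int.fract (x + k * α) := hfacpos x hxS k hk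
      have hv : 0 < Int.fract (y + k * α) := hfacpos y hyS k hk
      generalize hugen : Int.fract (x + k * α) = u at *
      generalize hvgen : Int.fract (y + k * α) = v at *
      have l1 : Real.log (u / v) ≤ u / v - 1 := Real.log_le_sub_one_of_pos (by positivity)
      have l2 : Real.log (u / v) = Real.log u - Real.log v := Real.log_div (ne_of_gt hu) (ne_of_gt hv)
      have l3 : u / v - 1 = (u - v) / v := by field_simp
      have l4 : (u - v) / v ≤ -(y - x) := by
        rw [div_le_iff₀ hv]
        nlinarith
      linarith
    -- sum up
    have hsum : Real.log (Wprod α N x) + N * (y - x) ≤ Real.log (Wprod α N y) := by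
      unfold Wprod
      rw [Real.log_prod (fun k hk => ne_of_gt (hfacpos x hxS k hk)),
        Real.log_prod (fun k hk => ne_of_gt (hfacpos y hyS k hk))]
      have := Finset.sum_le_sum hlogfac
      rw [Finset.sum_add_distrib, Finset.sum_const, Finset.card_range] at this
      simpa [nsmul_eq_mul] using this
    have hlx : Real.log A ≤ Real.log (Wprod α N x) := Real.log_le_log hA hxS.2.1
    have hly : Real.log (Wprod α N y) ≤ Real.log B :=
      Real.log_le_log (lt_of_lt_of_le hA hyS.2.1) hyS.2.2
    have hN' : (0:ℝ) < N := by exact_mod_cast Nat.pos_of_ne_zero (by omega)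
    rw [hℓdef, le_div_iff₀ hN']
    nlinarith
  calc volume S ≤ (D.card + 1) * ENNReal.ofReal (2 * ℓ) := cover_lemma hl D S key
    _ ≤ (N + 1) * ENNReal.ofReal (2 * ℓ) := by
        gcongr



lemma cheb {p : ℝ≥0∞} [Fact (1 ≤ p)] (hp0 : p ≠ 0) (hp' : p ≠ ∞)
    (d : Lp ℂ p μ01) {δ t : ℝ} (ht : 0 < t) (hd : ‖d‖ < δ) :
    μ01 {y | t ≤ ‖(d : ℝ → ℂ) y‖} ≤ ENNReal.ofReal (δ / t) ^ p.toReal := by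
  set r := p.toReal with hr
  have hrpos : 0 < r := ENNReal.toReal_pos hp0 hp'
  have hδ : 0 < δ := lt_of_le_of_lt (norm_nonneg d) hd
  have h1 : eLpNorm d p μ01 < ENNReal.ofReal δ := by
    rw [ENNReal.lt_ofReal_iff_toReal_lt (Lp.eLpNorm_ne_top d)]
    rw [← Lp.norm_def]; exact hd
  have h2 : (∫⁻ y, (‖(d : ℝ → ℂ) y‖₊ : ℝ≥0∞) ^ r ∂μ01) = (eLpNorm d p μ01) ^ r := by
    rw [eLpNorm_eq_lintegral_rpow_enorm_toReal hp0 hp', ← ENNReal.rpow_mul,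
      one_div_mul_cancel (ne_of_gt hrpos), ENNReal.rpow_one]
    rfl
  have hmeas : AEMeasurable (fun y => (‖(d : ℝ → ℂ) y‖₊ : ℝ≥0∞) ^ r) μ01 := by
    apply AEMeasurable.pow_const
    exact (Lp.aestronglyMeasurable d).enorm
  have markov := mul_meas_ge_le_lintegral₀ hmeas (ENNReal.ofReal t ^ r)
  have hsub : {y | t ≤ ‖(d : ℝ → ℂ) y‖} ⊆
      {y | ENNReal.ofReal t ^ r ≤ (‖(d : ℝ → ℂ) y‖₊ : ℝ≥0∞) ^ r} := by
    intro y hy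
    simp only [Set.mem_setOf_eq] at hy ⊢
    apply ENNReal.rpow_le_rpow _ (le_of_lt hrpos)
    rw [show ((‖(d : ℝ → ℂ) y‖₊ : ℝ≥0∞)) = ENNReal.ofReal ‖(d : ℝ → ℂ) y‖ from (ofReal_norm _).symm]
    exact ENNReal.ofReal_le_ofReal hy
  have ht0 : ENNReal.ofReal t ^ r ≠ 0 := by
    apply ne_of_gt
    apply ENNReal.rpow_pos (ENNReal.ofReal_pos.mpr ht) ENNReal.ofReal_ne_top
  have httop : ENNReal.ofReal t ^ r ≠ ∞ := by
    apply ENNReal.rpow_ne_top_of_nonneg (le_of_lt hrpos) ENNReal.ofReal_ne_top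
  have key : ENNReal.ofReal t ^ r * μ01 {y | t ≤ ‖(d : ℝ → ℂ) y‖} ≤ ENNReal.ofReal δ ^ r := by
    calc ENNReal.ofReal t ^ r * μ01 {y | t ≤ ‖(d : ℝ → ℂ) y‖}
        ≤ ENNReal.ofReal t ^ r *
          μ01 {y | ENNReal.ofReal t ^ r ≤ (‖(d : ℝ → ℂ) y‖₊ : ℝ≥0∞) ^ r} := by
          exact mul_le_mul_right (measure_mono hsub) _
      _ ≤ ∫⁻ y, (‖(d : ℝ → ℂ) y‖₊ : ℝ≥0∞) ^ r ∂μ01 := markov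
      _ = (eLpNorm d p μ01) ^ r := h2
      _ ≤ ENNReal.ofReal δ ^ r := ENNReal.rpow_le_rpow (le_of_lt h1) (le_of_lt hrpos)
  rw [mul_comm] at key
  have := (ENNReal.le_div_iff_mul_le (Or.inl ht0) (Or.inl httop)).mpr key
  calc μ01 {y | t ≤ ‖(d : ℝ → ℂ) y‖} ≤ ENNReal.ofReal δ ^ r / ENNReal.ofReal t ^ r := this
    _ = (ENNReal.ofReal δ / ENNReal.ofReal t) ^ r :=
        (ENNReal.div_rpow_of_nonneg _ _ (le_of_lt hrpos)).symm
    _ = ENNReal.ofReal (δ / t) ^ r := by rw [ENNReal.ofReal_div_of_pos ht]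
lemma keyA {p : ℝ≥0∞} [Fact (1 ≤ p)] (α : ℝ)
    (T : Lp ℂ p μ01 →L[ℂ] Lp ℂ p μ01)
    (hT : ∀ f : Lp ℂ p μ01, ∀ᵐ x ∂μ01, (T f) x = (x : ℂ) * f (Int.fract (x + α)))
    (f : Lp ℂ p μ01) (N : ℕ) :
    ∀ᵐ x ∂μ01, ((T ^ N) f) x = ((Wprod α N x : ℝ) : ℂ) * f (tauN α N x) := by
  induction N with
  | zero =>
    have h0 : (T ^ 0) f = f := by rw [pow_zero, ContinuousLinearMap.one_apply]
    rw [h0]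
    filter_upwards [ae_Ico] with x hx
    have : tauN α 0 x = x := by
      unfold tauN
      push_cast
      rw [zero_mul, add_zero, Int.fract_eq_self.mpr ⟨hx.1, hx.2⟩]
    rw [this]
    unfold Wprod
    simp
  | succ N IH =>
    have hpow : (T ^ (N + 1)) f = T ((T ^ N) f) := by
      rw [pow_succ', ContinuousLinearMap.mul_apply]
    have h1 := hT ((T ^ N) f)
    -- pull back IH along x ↦ fract (x + α)
    have h2 : ∀ᵐ x ∂μ01, ((T ^ N) f) (Int.fract (x + α)) =
        ((Wprod α N (Int.fract (x + α)) : ℝ) : ℂ) * f (tauN α N (Int.fract (x + α))) := by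
      exact ae_iff.mpr (pullback_null α (ae_iff.mp IH))
    filter_upwards [h1, h2, ae_Ico] with x hx1 hx2 hx3
    rw [hpow, hx1, hx2]
    have htau : tauN α N (Int.fract (x + α)) = tauN α (N + 1) x := by
      unfold tauN
      rw [fract_fract_add]
      push_cast
      ring_nf
    have hW : Wprod α (N + 1) x = x * Wprod α N (Int.fract (x + α)) := by
      unfold Wprod
      rw [Finset.prod_range_succ']
      have h0 : Int.fract (x + (0:ℕ) * α) = x := by
        push_cast
        rw [zero_mul, add_zero, Int.fract_eq_self.mpr ⟨hx3.1, hx3.2⟩]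
      rw [h0]
      rw [mul_comm]
      congr 1
      apply Finset.prod_congr rfl
      intro k _
      rw [fract_fract_add]
      push_cast
      ring_nf
    rw [htau, hW]
    push_cast
    ring
/-- `T` is the Bishop operator `T_α` on `L^p([0,1])`, i.e.
`(T f)(x) = x · f({x + α})` for a.e. `x ∈ [0,1]`, where `{·}` is the fractional part. -/
def IsBishopOp (p : ℝ≥0∞) [Fact (1 ≤ p)] (α : ℝ)
    (T : Lp ℂ p μ01 →L[ℂ] Lp ℂ p μ01) : Prop :=
  ∀ f : Lp ℂ p μ01, ∀ᵐ x ∂μ01, (T f) x = (x : ℂ) * f (Int.fract (x + α))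

/-- `T` is the weighted translation operator `T_{φ,α}` on `L^p([0,1])`, i.e.
`(T f)(x) = φ(x) · f({x + α})` for a.e. `x ∈ [0,1]`. -/
def IsWTOp (p : ℝ≥0∞) [Fact (1 ≤ p)] (φ : ℝ → ℂ) (α : ℝ)
    (T : Lp ℂ p μ01 →L[ℂ] Lp ℂ p μ01) : Prop :=
  ∀ f : Lp ℂ p μ01, ∀ᵐ x ∂μ01, (T f) x = φ x * f (Int.fract (x + α))

set_option maxHeartbeats 2000000 in
/-- For every `α ∈ [0,1]` and `1 < p < ∞`, the Bishop operator `T_α`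
on `L^p([0,1])` is not supercyclic: there is no `f` such that
`{λ·T_α^n f : λ ∈ ℂ, n ≥ 0}` is dense in `L^p([0,1])`. -/
theorem bishop_not_supercyclic (p : ℝ≥0∞) [Fact (1 ≤ p)] (hp : 1 < p) (hp' : p ≠ ∞)
    (α : ℝ) (hα : α ∈ Set.Icc (0 : ℝ) 1)
    (T : Lp ℂ p μ01 →L[ℂ] Lp ℂ p μ01) (hT : IsBishopOp p α T) :
    ¬ ∃ f : Lp ℂ p μ01,
      Dense {g : Lp ℂ p μ01 | ∃ (c : ℂ) (n : ℕ), c • (T ^ n) f = g} := by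
  classical
  rintro ⟨f, hdense⟩
  have hp0 : p ≠ 0 := (lt_trans zero_lt_one hp).ne'
  have hr1 : 1 < p.toReal := by
    have := (ENNReal.toReal_lt_toReal ENNReal.one_ne_top hp').mpr hp
    simpa using this
  have hr0 : 0 < p.toReal := lt_trans zero_lt_one hr1
  -- the constant-one function u and the half-indicator b
  have huniv : μ01 (Set.univ : Set ℝ) ≠ ∞ := by
    rw [measure_univ]; exact ENNReal.one_ne_top
  set u : Lp ℂ p μ01 := indicatorConstLp p MeasurableSet.univ huniv (1 : ℂ) with hu
  have hucoe : ∀ᵐ y ∂μ01, u y = 1 := by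
    filter_upwards [indicatorConstLp_coeFn (p := p) (hs := MeasurableSet.univ)
      (hμs := huniv) (c := (1 : ℂ))] with y hy
    rw [hy, Set.indicator_univ]
  have hunorm : ‖u‖ = 1 := by
    rw [hu, norm_indicatorConstLp hp0 hp', measureReal_def, measure_univ]
    simp
  have hμhalf : μ01 (Set.Icc (0:ℝ) (1/2)) = ENNReal.ofReal (1/2) := by
    rw [mu01_apply]
    have : Set.Icc (0:ℝ) (1/2) ∩ Set.Icc 0 1 = Set.Icc (0:ℝ) (1/2) := by
      rw [Set.inter_eq_left]; apply Set.Icc_subset_Icc le_rfl; norm_num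
    rw [this, Real.volume_Icc]; norm_num
  have hμhalf' : μ01 (Set.Icc (0:ℝ) (1/2)) ≠ ∞ := by rw [hμhalf]; exact ENNReal.ofReal_ne_top
  set b : Lp ℂ p μ01 := indicatorConstLp p measurableSet_Icc hμhalf' (1 : ℂ) with hb
  have hbcoe : ∀ᵐ y ∂μ01, b y = Set.indicator (Set.Icc (0:ℝ) (1/2)) (fun _ => (1:ℂ)) y :=
    indicatorConstLp_coeFn
  have hbne : b ≠ 0 := by
    intro h0
    have : ‖b‖ = 0 := by rw [h0, norm_zero]
    rw [hb, norm_indicatorConstLp hp0 hp', measureReal_def, hμhalf] at this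
    have h2 : (ENNReal.ofReal (1/2 : ℝ)).toReal = 1/2 := by
      rw [ENNReal.toReal_ofReal]; norm_num
    rw [h2] at this
    simp only [norm_one, one_mul] at this
    have : (0:ℝ) < (1/2 : ℝ) ^ (1 / p.toReal) := by positivity
    linarith [this]
  -- independence: u is not a multiple of b
  have hind : ∀ z : ℂ, u ≠ z • b := by
    intro z hz
    have hzb : ∀ᵐ y ∂μ01, (z • b) y = z • (b y) := Lp.coeFn_smul z b
    have hall : ∀ᵐ y ∂μ01,
        (1 : ℂ) = z • Set.indicator (Set.Icc (0:ℝ) (1/2)) (fun _ => (1:ℂ)) y := by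
      filter_upwards [hucoe, hzb, hbcoe] with y h1 h2 h3
      rw [← h3, ← h2, ← hz, h1]
    have hsub : Set.Ioc (1/2 : ℝ) 1 ⊆ {y | ¬ ((1 : ℂ) =
        z • Set.indicator (Set.Icc (0:ℝ) (1/2)) (fun _ => (1:ℂ)) y)} := by
      intro y hy
      simp only [Set.mem_setOf_eq]
      rw [Set.indicator_of_notMem (by
        simp only [Set.mem_Icc, not_and_or, not_le]
        right; exact hy.1)]
      simp
    have h1 : μ01 (Set.Ioc (1/2 : ℝ) 1) = 0 :=
      le_antisymm (le_trans (measure_mono hsub) (le_of_eq (ae_iff.mp hall))) zero_le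
    rw [mu01_apply] at h1
    have : Set.Ioc (1/2 : ℝ) 1 ∩ Set.Icc 0 1 = Set.Ioc (1/2 : ℝ) 1 := by
      rw [Set.inter_eq_left]
      intro y hy
      exact ⟨by linarith [hy.1], hy.2⟩
    rw [this, Real.volume_Ioc] at h1
    rw [ENNReal.ofReal_eq_zero] at h1
    linarith
  -- the constants
  set t : ℝ := 1/100 with ht
  set δ : ℝ := 1/800 with hδ
  have hδpos : (0:ℝ) < δ := by norm_num [hδ]
  have htpos : (0:ℝ) < t := by norm_num [ht]
  -- first approximation
  obtain ⟨z₁, hz₁S, hz₁ball⟩ := hdense.exists_mem_open Metric.isOpen_ball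
    ⟨u, Metric.mem_ball_self hδpos⟩
  obtain ⟨c₁, n, hz₁⟩ := hz₁S
  have hz₁u : ‖c₁ • (T ^ n) f - u‖ < δ := by
    rw [hz₁, ← dist_eq_norm]
    exact Metric.mem_ball.mp hz₁ball
  -- the union of lines for exponents ≤ n
  set L : Set (Lp ℂ p μ01) := ⋃ j ∈ Set.Iic n, ((ℂ ∙ ((T ^ j) f) : Submodule ℂ _) : Set _)
    with hL
  have hLclosed : IsClosed L := by
    apply (Set.finite_Iic n).isClosed_biUnion
    intro j _
    exact Submodule.closed_of_finiteDimensional _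
  -- at most one q per line
  have hQsub : ∀ g : Lp ℂ p μ01,
      {q : ℝ | u + (q : ℂ) • b ∈ (ℂ ∙ g : Submodule ℂ _)}.Subsingleton := by
    intro g q hq q' hq'
    by_contra hne
    obtain ⟨a, ha⟩ := Submodule.mem_span_singleton.mp hq
    obtain ⟨a', ha'⟩ := Submodule.mem_span_singleton.mp hq'
    have hqq : ((q : ℂ) - q') ≠ 0 := by
      rw [sub_ne_zero]
      exact_mod_cast hne
    have hdiff : ((q : ℂ) - q') • b = (a - a') • g := by
      rw [sub_smul, sub_smul, ha, ha']
      abel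
    set w : ℂ := (a - a') / ((q : ℂ) - q') with hw
    have hbg : b = w • g := by
      rw [hw, div_eq_mul_inv, mul_comm, mul_smul, ← hdiff, smul_smul,
        inv_mul_cancel₀ hqq, one_smul]
    rcases eq_or_ne w 0 with hw0 | hw0
    · rw [hw0, zero_smul] at hbg
      exact hbne hbg
    · have hgw : g = w⁻¹ • b := by rw [hbg, smul_smul, inv_mul_cancel₀ hw0, one_smul]
      have hu' : u = (a * w⁻¹ - q) • b := by
        have : u = a • g - (q : ℂ) • b := by rw [ha]; abel
        rw [this, hgw, smul_smul, sub_smul]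
      exact hind _ hu'
  have hQfin : {q : ℝ | u + (q : ℂ) • b ∈ L}.Finite := by
    apply Set.Finite.subset (Set.Finite.biUnion (Set.finite_Iic n)
      (fun j _ => (hQsub ((T ^ j) f)).finite))
    intro q hq
    simp only [hL, Set.mem_setOf_eq, Set.mem_iUnion, SetLike.mem_coe] at hq ⊢
    exact hq
  -- pick q
  set ε' : ℝ := δ / (2 * (‖b‖ + 1)) with hε'
  have hε'pos : 0 < ε' := by
    apply div_pos hδpos
    positivity
  obtain ⟨q, hqI, hqQ⟩ := ((Set.Ioo_infinite hε'pos).diff hQfin).nonempty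
  set y : Lp ℂ p μ01 := u + (q : ℂ) • b with hy
  have hyL : y ∉ L := hqQ
  obtain ⟨ry, hry, hball⟩ := Metric.isOpen_iff.mp hLclosed.isOpen_compl y hyL
  -- second approximation
  have hmin : 0 < min ry (δ/2) := lt_min hry (by positivity)
  obtain ⟨z₂, hz₂S, hz₂ball⟩ := hdense.exists_mem_open Metric.isOpen_ball
    ⟨y, Metric.mem_ball_self hmin⟩
  obtain ⟨c₂, m, hz₂⟩ := hz₂S
  have hz₂L : z₂ ∉ L := by
    intro hmem
    exact (hball (Metric.ball_subset_ball (min_le_left _ _) hz₂ball)) hmem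
  have hmn : n < m := by
    by_contra hc
    push_neg at hc
    apply hz₂L
    rw [hL]
    apply Set.mem_biUnion (Set.mem_Iic.mpr hc)
    exact Submodule.mem_span_singleton.mpr ⟨c₂, hz₂⟩
  have hz₂u : ‖c₂ • (T ^ m) f - u‖ < δ := by
    rw [hz₂]
    have h1 : dist z₂ y < δ/2 := lt_of_lt_of_le (Metric.mem_ball.mp hz₂ball) (min_le_right _ _)
    have h2 : dist y u < δ/2 := by
      rw [dist_eq_norm, hy]
      have : u + (q : ℂ) • b - u = (q : ℂ) • b := by abel
      rw [this, norm_smul, Complex.norm_real, Real.norm_eq_abs, abs_of_pos hqI.1]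
      calc q * ‖b‖ ≤ q * (‖b‖ + 1) := by nlinarith [norm_nonneg b, hqI.1]
        _ < ε' * (‖b‖ + 1) := by
            apply mul_lt_mul_of_pos_right hqI.2
            positivity
        _ = δ/2 := by
            rw [hε', div_mul_eq_mul_div, mul_comm δ (‖b‖+1), mul_comm (2:ℝ) (‖b‖+1),
              mul_div_mul_left _ _ (ne_of_gt (by positivity : (0:ℝ) < ‖b‖ + 1))]
    calc ‖z₂ - u‖ = dist z₂ u := (dist_eq_norm _ _).symm
      _ ≤ dist z₂ y + dist y u := dist_triangle _ _ _
      _ < δ/2 + δ/2 := add_lt_add h1 h2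
      _ = δ := by ring
  -- scalars are nonzero
  have hc₁ : c₁ ≠ 0 := by
    intro h0
    rw [h0, zero_smul, zero_sub, norm_neg, hunorm] at hz₁u
    norm_num [hδ] at hz₁u
  have hc₂ : c₂ ≠ 0 := by
    intro h0
    rw [h0, zero_smul, zero_sub, norm_neg, hunorm] at hz₂u
    norm_num [hδ] at hz₂u
  have hs₁ : 0 < ‖c₁‖ := norm_pos_iff.mpr hc₁
  have hs₂ : 0 < ‖c₂‖ := norm_pos_iff.mpr hc₂
  -- Chebyshev-type bound for both approximations
  have hcheb : ∀ (cc : ℂ) (k : ℕ), ‖cc • (T ^ k) f - u‖ < δ →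
      μ01 {x : ℝ | ¬ |‖cc‖ * (Wprod α k x * ‖f (tauN α k x)‖) - 1| ≤ t} ≤
        ENNReal.ofReal (1/8) := by
    intro cc k hcc
    have hch := cheb hp0 hp' (cc • (T ^ k) f - u) htpos hcc
    have hae : ∀ᵐ x ∂μ01,
        x ∈ {x : ℝ | ¬ |‖cc‖ * (Wprod α k x * ‖f (tauN α k x)‖) - 1| ≤ t} →
        x ∈ {x : ℝ | t ≤ ‖((cc • (T ^ k) f - u : Lp ℂ p μ01) : ℝ → ℂ) x‖} := by
      filter_upwards [keyA α T hT f k, Lp.coeFn_sub (cc • (T ^ k) f) u,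
        Lp.coeFn_smul cc ((T ^ k) f), hucoe] with x h1 h2 h3 h4 hbad
      replace hbad : ¬ |‖cc‖ * (Wprod α k x * ‖f (tauN α k x)‖) - 1| ≤ t := hbad
      show t ≤ ‖((cc • (T ^ k) f - u : Lp ℂ p μ01) : ℝ → ℂ) x‖
      have hx2 : ((cc • (T ^ k) f - u : Lp ℂ p μ01) : ℝ → ℂ) x =
          cc • (((T ^ k) f : ℝ → ℂ) x) - 1 := by
        rw [h2, Pi.sub_apply, h3, Pi.smul_apply, h4]
      have hval : ‖cc • (((T ^ k) f : ℝ → ℂ) x)‖ =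
          ‖cc‖ * (Wprod α k x * ‖f (tauN α k x)‖) := by
        rw [h1, norm_smul, norm_mul, Complex.norm_real, Real.norm_eq_abs,
          abs_of_nonneg (Wprod_nonneg α k x)]
      have htri := abs_norm_sub_norm_le (cc • (((T ^ k) f : ℝ → ℂ) x)) (1 : ℂ)
      rw [norm_one, hval] at htri
      rw [hx2]
      push_neg at hbad
      linarith [le_abs_self (‖cc‖ * (Wprod α k x * ‖f (tauN α k x)‖) - 1),
        neg_abs_le (‖cc‖ * (Wprod α k x * ‖f (tauN α k x)‖) - 1)]
    calc μ01 {x : ℝ | ¬ |‖cc‖ * (Wprod α k x * ‖f (tauN α k x)‖) - 1| ≤ t}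
        ≤ μ01 {x : ℝ | t ≤ ‖((cc • (T ^ k) f - u : Lp ℂ p μ01) : ℝ → ℂ) x‖} :=
          measure_mono_ae hae
      _ ≤ ENNReal.ofReal (δ / t) ^ p.toReal := hch
      _ ≤ ENNReal.ofReal (1/8) := by
          have hδt : δ / t = 1/8 := by norm_num [hδ, ht]
          rw [hδt]
          calc ENNReal.ofReal (1/8) ^ p.toReal ≤ ENNReal.ofReal (1/8) ^ (1:ℝ) :=
              ENNReal.rpow_le_rpow_of_exponent_ge
                (ENNReal.ofReal_le_one.mpr (by norm_num)) (le_of_lt hr1)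
            _ = ENNReal.ofReal (1/8) := ENNReal.rpow_one _
  have hG₁ := hcheb c₁ n hz₁u
  have hG₂ := hcheb c₂ m hz₂u
  -- set up the band
  set N : ℕ := m - n with hNdef
  have hmN : m = N + n := by omega
  have hN1 : 1 ≤ N := by omega
  have ht1 : t < 1 := by norm_num [ht]
  set A : ℝ := ((1 - t) * ‖c₁‖) / ((1 + t) * ‖c₂‖) with hA
  set B : ℝ := ((1 + t) * ‖c₁‖) / ((1 - t) * ‖c₂‖) with hB
  have hApos : 0 < A := by
    apply div_pos (mul_pos (by linarith) hs₁) (mul_pos (by linarith) hs₂)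
  have hAB : A ≤ B := by
    rw [hA, hB]
    apply div_le_div₀ (le_of_lt (mul_pos (by linarith) hs₁))
      (by nlinarith) (mul_pos (by linarith) hs₂) (by nlinarith)
  -- pointwise: good points are in the band
  have hGood : ∀ x : ℝ, x ∈ Set.Ioo (0:ℝ) 1 →
      |‖c₁‖ * (Wprod α n (tauN α N x) * ‖f (tauN α n (tauN α N x))‖) - 1| ≤ t →
      |‖c₂‖ * (Wprod α m x * ‖f (tauN α m x)‖) - 1| ≤ t →
      A ≤ Wprod α N x ∧ Wprod α N x ≤ B := by
    intro x hx01 h1 h2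
    rw [hmN, Wprod_add, ← tauN_comp, mul_assoc (Wprod α N x)] at h2
    obtain ⟨h1a, h1b⟩ := abs_le.mp h1
    obtain ⟨h2a, h2b⟩ := abs_le.mp h2
    set W : ℝ := Wprod α N x with hW
    set Q : ℝ := Wprod α n (tauN α N x) * ‖f (tauN α n (tauN α N x))‖ with hQ
    have hq1 : 0 < ‖c₁‖ * Q := by linarith
    have hQpos : 0 < Q := by
      have := div_pos hq1 hs₁
      rwa [mul_div_cancel_left₀ _ (ne_of_gt hs₁)] at this
    have h1b' : ‖c₁‖ * Q ≤ 1 + t := by linarith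
    have h2a' : 1 - t ≤ ‖c₂‖ * (W * Q) := by linarith
    have h1a' : 1 - t ≤ ‖c₁‖ * Q := by linarith
    have h2b' : ‖c₂‖ * (W * Q) ≤ 1 + t := by linarith
    constructor
    · rw [hA, div_le_iff₀ (mul_pos (by linarith) hs₂)]
      apply le_of_mul_le_mul_right _ hQpos
      have hint1 : (1 - t) * (‖c₁‖ * Q) ≤ (1 - t) * (1 + t) :=
        mul_le_mul_of_nonneg_left h1b' (by linarith)
      have hint2 : (1 + t) * (1 - t) ≤ (1 + t) * (‖c₂‖ * (W * Q)) :=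
        mul_le_mul_of_nonneg_left h2a' (by linarith)
      nlinarith [hint1, hint2]
    · rw [hB, le_div_iff₀ (mul_pos (by linarith) hs₂)]
      apply le_of_mul_le_mul_right _ hQpos
      have hint1 : (1 - t) * (‖c₂‖ * (W * Q)) ≤ (1 - t) * (1 + t) :=
        mul_le_mul_of_nonneg_left h2b' (by linarith)
      have hint2 : (1 + t) * (1 - t) ≤ (1 + t) * (‖c₁‖ * Q) :=
        mul_le_mul_of_nonneg_left h1a' (by linarith)
      nlinarith [hint1, hint2]
  -- logarithmic width of the band
  have hlog : Real.log B - Real.log A ≤ 6 * t := by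
    have hn1 : Real.log A = Real.log (1 - t) + Real.log ‖c₁‖
        - (Real.log (1 + t) + Real.log ‖c₂‖) := by
      rw [hA, Real.log_div (by positivity) (by positivity),
        Real.log_mul (by linarith : (1:ℝ) - t ≠ 0) (ne_of_gt hs₁),
        Real.log_mul (by linarith : (1:ℝ) + t ≠ 0) (ne_of_gt hs₂)]
    have hn2 : Real.log B = Real.log (1 + t) + Real.log ‖c₁‖
        - (Real.log (1 - t) + Real.log ‖c₂‖) := by
      rw [hB, Real.log_div (by positivity) (by positivity),
        Real.log_mul (by linarith : (1:ℝ) + t ≠ 0) (ne_of_gt hs₁),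
        Real.log_mul (by linarith : (1:ℝ) - t ≠ 0) (ne_of_gt hs₂)]
    have hl1 : Real.log (1 + t) ≤ t := by
      have := Real.log_le_sub_one_of_pos (by linarith : (0:ℝ) < 1 + t)
      linarith
    have hl2 : - Real.log (1 - t) ≤ 2 * t := by
      have hpos : (0:ℝ) < (1 - t)⁻¹ := by positivity
      have h3 := Real.log_le_sub_one_of_pos hpos
      rw [Real.log_inv] at h3
      have h4 : (1 - t)⁻¹ - 1 ≤ 2 * t := by
        rw [ht]; norm_num
      exact le_trans h3 h4
    rw [hn1, hn2]
    linarith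
  -- conclusion
  have hband := band_lemma α N hN1 hApos hAB
  have hbandle :
      volume {x : ℝ | x ∈ Set.Ioo (0:ℝ) 1 ∧ A ≤ Wprod α N x ∧ Wprod α N x ≤ B} ≤
      ENNReal.ofReal (24 * t) := by
    refine le_trans hband ?_
    have hX0 : 0 ≤ Real.log B - Real.log A := by
      have := Real.log_le_log hApos hAB
      linarith
    have hNr : (1:ℝ) ≤ (N:ℝ) := by exact_mod_cast hN1
    have hcast : ((N:ℝ≥0∞) + 1) = ENNReal.ofReal ((N:ℝ) + 1) := by
      rw [ENNReal.ofReal_add (Nat.cast_nonneg N) zero_le_one, ENNReal.ofReal_natCast,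
        ENNReal.ofReal_one]
    rw [hcast, ← ENNReal.ofReal_mul (by positivity)]
    apply ENNReal.ofReal_le_ofReal
    have h1 : ((N:ℝ) + 1) / N ≤ 2 := by
      rw [div_le_iff₀ (by linarith)]
      linarith
    calc ((N:ℝ) + 1) * (2 * ((Real.log B - Real.log A) / N))
        = 2 * (Real.log B - Real.log A) * (((N:ℝ) + 1) / N) := by ring
      _ ≤ 2 * (Real.log B - Real.log A) * 2 := by
          apply mul_le_mul_of_nonneg_left h1 (by linarith)
      _ ≤ 24 * t := by nlinarith
  have hIoo : μ01 (Set.Ioo (0:ℝ) 1)ᶜ = 0 := by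
    rw [mu01_apply]
    have hsub : (Set.Ioo (0:ℝ) 1)ᶜ ∩ Set.Icc 0 1 ⊆ {0, 1} := by
      rintro x ⟨hx1, hx2, hx3⟩
      simp only [Set.mem_compl_iff, Set.mem_Ioo, not_and_or, not_lt] at hx1
      simp only [Set.mem_insert_iff, Set.mem_singleton_iff]
      rcases hx1 with h | h
      · left; linarith
      · right; linarith
    refine le_antisymm (le_trans (measure_mono hsub) ?_) zero_le
    have : ({0, 1} : Set ℝ).Finite := (Set.finite_singleton 1).insert 0
    rw [this.measure_zero volume]
  -- covering of the whole space
  have hcover : (Set.univ : Set ℝ) ⊆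
      ({x : ℝ | ¬ |‖c₂‖ * (Wprod α m x * ‖f (tauN α m x)‖) - 1| ≤ t} ∪
      ((fun x : ℝ => Int.fract (x + (N:ℝ) * α)) ⁻¹'
        {y : ℝ | ¬ |‖c₁‖ * (Wprod α n y * ‖f (tauN α n y)‖) - 1| ≤ t}) ∪
      (Set.Ioo (0:ℝ) 1)ᶜ) ∪
      {x : ℝ | x ∈ Set.Ioo (0:ℝ) 1 ∧ A ≤ Wprod α N x ∧ Wprod α N x ≤ B} := by
    intro x _
    by_cases hx1 : x ∈ Set.Ioo (0:ℝ) 1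
    · by_cases hx2 : |‖c₁‖ * (Wprod α n (tauN α N x) * ‖f (tauN α n (tauN α N x))‖) - 1| ≤ t
      · by_cases hx3 : |‖c₂‖ * (Wprod α m x * ‖f (tauN α m x)‖) - 1| ≤ t
        · right
          exact ⟨hx1, hGood x hx1 hx2 hx3⟩
        · left; left; left; exact hx3
      · left; left; right
        exact hx2
    · left; right; exact hx1
  -- the final contradiction
  have hpre : μ01 ((fun x : ℝ => Int.fract (x + (N:ℝ) * α)) ⁻¹'
      {y : ℝ | ¬ |‖c₁‖ * (Wprod α n y * ‖f (tauN α n y)‖) - 1| ≤ t}) ≤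
      ENNReal.ofReal (1/8) :=
    le_trans (pullback _ _) hG₁
  have hbb : μ01 {x : ℝ | x ∈ Set.Ioo (0:ℝ) 1 ∧ A ≤ Wprod α N x ∧ Wprod α N x ≤ B} ≤
      ENNReal.ofReal (24 * t) := by
    rw [mu01_apply]
    exact le_trans (measure_mono Set.inter_subset_left) hbandle
  have hfinal : (1:ℝ≥0∞) ≤ ENNReal.ofReal (1/8) + ENNReal.ofReal (1/8) + 0 +
      ENNReal.ofReal (24 * t) := by
    calc (1:ℝ≥0∞) = μ01 Set.univ := measure_univ.symm
      _ ≤ μ01 (({x : ℝ | ¬ |‖c₂‖ * (Wprod α m x * ‖f (tauN α m x)‖) - 1| ≤ t} ∪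
          ((fun x : ℝ => Int.fract (x + (N:ℝ) * α)) ⁻¹'
            {y : ℝ | ¬ |‖c₁‖ * (Wprod α n y * ‖f (tauN α n y)‖) - 1| ≤ t}) ∪
          (Set.Ioo (0:ℝ) 1)ᶜ) ∪
          {x : ℝ | x ∈ Set.Ioo (0:ℝ) 1 ∧ A ≤ Wprod α N x ∧ Wprod α N x ≤ B}) :=
          measure_mono hcover
      _ ≤ μ01 ({x : ℝ | ¬ |‖c₂‖ * (Wprod α m x * ‖f (tauN α m x)‖) - 1| ≤ t}) +
          μ01 ((fun x : ℝ => Int.fract (x + (N:ℝ) * α)) ⁻¹'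
            {y : ℝ | ¬ |‖c₁‖ * (Wprod α n y * ‖f (tauN α n y)‖) - 1| ≤ t}) +
          μ01 ((Set.Ioo (0:ℝ) 1)ᶜ) +
          μ01 ({x : ℝ | x ∈ Set.Ioo (0:ℝ) 1 ∧ A ≤ Wprod α N x ∧ Wprod α N x ≤ B}) := by
          refine le_trans (measure_union_le _ _) ?_
          gcongr
          refine le_trans (measure_union_le _ _) ?_
          gcongr
          exact measure_union_le _ _
      _ ≤ ENNReal.ofReal (1/8) + ENNReal.ofReal (1/8) + 0 + ENNReal.ofReal (24 * t) := by
          exact add_le_add (add_le_add (add_le_add hG₂ hpre) (le_of_eq hIoo)) hbb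
  rw [add_zero, ← ENNReal.ofReal_add (by norm_num) (by norm_num [ht]),
    ← ENNReal.ofReal_add (by norm_num) (by norm_num [ht])] at hfinal
  have := ENNReal.one_le_ofReal.mp hfinal
  rw [ht] at this
  norm_num at this
end

section
/- Let φ : [0,1] → ℝ be a bounded, increasing, convex function with φ(0) = 0, let α ∈ [0,1], and let 1 < p < ∞. Then the weighted translation operator T_{φ,α} on L^p([0,1]) is not supercyclic. -/
open MeasureTheory Set Filter Topology Polynomial
open scoped ENNReal NNReal

/-! ### Auxiliary material: a sector in the complex plane -/

/-- A closed sector around the positive real axis. -/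
def InK (z : ℂ) : Prop := 0 < z.re ∧ |z.im| ≤ z.re / 3

lemma InK_conj {a : ℂ} (h : InK a) : InK (starRingEnd ℂ a) := by
  refine ⟨by simpa using h.1, ?_⟩
  simpa [Complex.conj_re, Complex.conj_im, abs_neg] using h.2

lemma InK_mul3 {a b c : ℂ} (ha : InK a) (hb : InK b) (hc : InK c) :
    0 < (a * b * c).re := by
  obtain ⟨ha1, ha2⟩ := ha
  obtain ⟨hb1, hb2⟩ := hb
  obtain ⟨hc1, hc2⟩ := hc
  have hab : |a.im * b.im| ≤ a.re / 3 * (b.re / 3) := by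
    rw [abs_mul]; exact mul_le_mul ha2 hb2 (abs_nonneg _) (by positivity)
  have hbc : |b.im * c.im| ≤ b.re / 3 * (c.re / 3) := by
    rw [abs_mul]; exact mul_le_mul hb2 hc2 (abs_nonneg _) (by positivity)
  have hac : |a.im * c.im| ≤ a.re / 3 * (c.re / 3) := by
    rw [abs_mul]; exact mul_le_mul ha2 hc2 (abs_nonneg _) (by positivity)
  rw [abs_le] at hab hbc hac
  simp only [Complex.mul_re, Complex.mul_im]
  nlinarith [mul_pos (mul_pos ha1 hb1) hc1,
    mul_le_mul_of_nonneg_right hab.2 hc1.le,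
    mul_le_mul_of_nonneg_left hbc.2 ha1.le,
    mul_le_mul_of_nonneg_right hac.2 hb1.le]

lemma InK_of_close {w : ℝ} (hw : 0 ≤ w) {z : ℂ} (h : ‖(w : ℂ) * z - 1‖ < 4⁻¹) :
    InK z := by
  have hre : |((w : ℂ) * z - 1).re| ≤ ‖(w : ℂ) * z - 1‖ := Complex.abs_re_le_norm _
  have him : |((w : ℂ) * z - 1).im| ≤ ‖(w : ℂ) * z - 1‖ := Complex.abs_im_le_norm _
  have hre' : |w * z.re - 1| < 4⁻¹ := by
    have : ((w : ℂ) * z - 1).re = w * z.re - 1 := by simp [Complex.mul_re]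
    rw [this] at hre; linarith
  have him' : |w * z.im| < 4⁻¹ := by
    have : ((w : ℂ) * z - 1).im = w * z.im := by simp [Complex.mul_im]
    rw [this] at him; linarith
  have h1 : (3:ℝ)/4 < w * z.re := by
    have := abs_lt.1 hre'; linarith [this.1]
  have hwpos : 0 < w := by
    rcases hw.lt_or_eq with h' | h'
    · exact h'
    · exfalso; rw [← h'] at h1; simp at h1; linarith
  have hzre : 0 < z.re := by
    by_contra hz
    push_neg at hz
    nlinarith
  refine ⟨hzre, ?_⟩
  have : w * |z.im| < 4⁻¹ := by rwa [← abs_of_pos hwpos, ← abs_mul]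
  have h3 : w * |z.im| ≤ w * (z.re / 3) := by nlinarith
  exact le_of_mul_le_mul_left h3 hwpos

lemma InK_of_close_neg {w : ℝ} (hw : 0 ≤ w) {z : ℂ} (h : ‖(w : ℂ) * z - (-1)‖ < 4⁻¹) :
    InK (-z) := by
  apply InK_of_close hw (z := -z)
  have : (w : ℂ) * (-z) - 1 = -((w : ℂ) * z - (-1)) := by ring
  rw [this, norm_neg]; exact h

lemma sector_contradiction {c c' z1 z2 : ℂ} (h1 : InK (c * z1)) (h2 : InK (c' * z1))
    (h3 : InK (c * z2)) (h4 : InK (-(c' * z2))) : False := by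
  have key : (c' * z1) * (c * z2) * (starRingEnd ℂ (c * z1))
      = (c' * z2) * ((c * z1) * starRingEnd ℂ (c * z1)) := by ring
  have hpos : 0 < ((c' * z1) * (c * z2) * (starRingEnd ℂ (c * z1))).re :=
    InK_mul3 h2 h3 (InK_conj h1)
  rw [key, Complex.mul_conj] at hpos
  have hre : ((c' * z2) * ((Complex.normSq (c * z1) : ℝ) : ℂ)).re
      = (c' * z2).re * Complex.normSq (c * z1) := by
    simp [Complex.mul_re]
  rw [hre] at hpos
  have hns : 0 ≤ Complex.normSq (c * z1) := Complex.normSq_nonneg _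
  have hneg : (c' * z2).re < 0 := by
    have := h4.1; simp only [Complex.neg_re] at this; linarith
  nlinarith

lemma InK_measurableSet : MeasurableSet {z : ℂ | InK z} := by
  have h : {z : ℂ | InK z} = {z : ℂ | 0 < z.re} ∩ {z : ℂ | |z.im| ≤ z.re / 3} := rfl
  rw [h]
  exact (measurableSet_lt measurable_const Complex.measurable_re).inter
    (measurableSet_le (measurable_abs.comp Complex.measurable_im)
      (Complex.measurable_re.div_const 3))

/-! ### Auxiliary material: measure theory on `[0,1]` -/

lemma μ01_eq_Ico : μ01 = volume.restrict (Ico 0 1) :=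
  (Measure.restrict_congr_set Ico_ae_eq_Icc).symm

instance inst_s8 : IsProbabilityMeasure μ01 := by
  constructor
  simp [μ01, Real.volume_Icc]

lemma ae_mem_Icc01 : ∀ᵐ x ∂μ01, x ∈ Icc (0:ℝ) 1 :=
  ae_restrict_mem measurableSet_Icc

lemma ae_mem_Ico01 : ∀ᵐ x ∂μ01, x ∈ Ico (0:ℝ) 1 := by
  rw [μ01_eq_Ico]
  exact ae_restrict_mem measurableSet_Ico

lemma fract_add_mp0 {β : ℝ} (hβ : β ∈ Ico (0:ℝ) 1) :
    MeasurePreserving (fun x : ℝ => Int.fract (x + β))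
      (volume.restrict (Ico 0 1)) (volume.restrict (Ico 0 1)) := by
  obtain ⟨hβ0, hβ1⟩ := hβ
  have hmeas : Measurable fun x : ℝ => Int.fract (x + β) :=
    measurable_fract.comp (measurable_add_const β)
  refine ⟨hmeas, ?_⟩
  have hsplit : (Ico (0:ℝ) 1) = Ico 0 (1 - β) ∪ Ico (1 - β) 1 :=
    (Ico_union_Ico_eq_Ico (by linarith) (by linarith)).symm
  have hpiece1 : Measure.map (fun x : ℝ => Int.fract (x + β))
      (volume.restrict (Ico 0 (1 - β))) = volume.restrict (Ico β 1) := by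
    have hae : (fun x : ℝ => Int.fract (x + β)) =ᵐ[volume.restrict (Ico 0 (1 - β))]
        fun x => x + β := by
      filter_upwards [ae_restrict_mem measurableSet_Ico] with x hx
      exact Int.fract_eq_self.2 ⟨by linarith [hx.1], by linarith [hx.2]⟩
    rw [Measure.map_congr hae]
    have hpre : (fun x : ℝ => x + β) ⁻¹' (Ico β 1) = Ico 0 (1 - β) := by
      ext x; simp only [mem_preimage, mem_Ico]
      constructor <;> intro h <;> exact ⟨by linarith [h.1], by linarith [h.2]⟩
    rw [← hpre, ← Measure.restrict_map (measurable_add_const β) measurableSet_Ico,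
      (measurePreserving_add_right volume β).map_eq]
  have hpiece2 : Measure.map (fun x : ℝ => Int.fract (x + β))
      (volume.restrict (Ico (1 - β) 1)) = volume.restrict (Ico 0 β) := by
    have hae : (fun x : ℝ => Int.fract (x + β)) =ᵐ[volume.restrict (Ico (1 - β) 1)]
        fun x => x + (β - 1) := by
      filter_upwards [ae_restrict_mem measurableSet_Ico] with x hx
      have h1 : Int.fract (x + β) = Int.fract (x + β - (1:ℤ)) := (Int.fract_sub_intCast _ _).symm
      rw [h1]
      push_cast
      have h2 : x + β - 1 = x + (β - 1) := by ring
      rw [h2]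
      exact Int.fract_eq_self.2 ⟨by linarith [hx.1], by linarith [hx.2]⟩
    rw [Measure.map_congr hae]
    have hpre : (fun x : ℝ => x + (β - 1)) ⁻¹' (Ico 0 β) = Ico (1 - β) 1 := by
      ext x; simp only [mem_preimage, mem_Ico]
      constructor <;> intro h <;> exact ⟨by linarith [h.1], by linarith [h.2]⟩
    rw [← hpre, ← Measure.restrict_map (measurable_add_const (β - 1)) measurableSet_Ico,
      (measurePreserving_add_right volume (β - 1)).map_eq]
  have hmain : Measure.map (fun x : ℝ => Int.fract (x + β)) (volume.restrict (Ico 0 1))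
      = volume.restrict (Ico β 1) + volume.restrict (Ico 0 β) := by
    conv_lhs => rw [hsplit]
    rw [Measure.restrict_union Set.Ico_disjoint_Ico_same measurableSet_Ico,
      Measure.map_add _ _ hmeas, hpiece1, hpiece2]
  rw [hmain, add_comm, ← Measure.restrict_union Set.Ico_disjoint_Ico_same measurableSet_Ico,
    Ico_union_Ico_eq_Ico (by linarith) (by linarith)]

lemma fract_add_mp (β : ℝ) :
    MeasurePreserving (fun x : ℝ => Int.fract (x + β)) μ01 μ01 := by
  have h : (fun x : ℝ => Int.fract (x + β)) = fun x => Int.fract (x + Int.fract β) := by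
    funext x
    have h1 : x + β = x + Int.fract β + (⌊β⌋ : ℤ) := by rw [Int.fract]; push_cast; ring
    rw [h1, Int.fract_add_intCast]
  rw [h, μ01_eq_Ico]
  exact fract_add_mp0 ⟨Int.fract_nonneg β, Int.fract_lt_one β⟩

/-! ### Auxiliary material: Chebyshev -/

lemma cheb_small {p : ℝ≥0∞} [Fact (1 ≤ p)] (hp : 1 < p) (hp' : p ≠ ∞)
    (F : Lp ℂ p μ01) (hF : ‖F‖ < 32⁻¹) :
    μ01 {x | 4⁻¹ ≤ ‖(F : ℝ → ℂ) x‖} ≤ ENNReal.ofReal 8⁻¹ := by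
  have hp0 : p ≠ 0 := (lt_trans zero_lt_one hp).ne'
  have hpT : 1 ≤ p.toReal := by
    have h := (ENNReal.toReal_lt_toReal (by simp) hp').2 hp
    simpa using h.le
  have heLp : eLpNorm (⇑F) p μ01 ≤ ENNReal.ofReal 32⁻¹ := by
    have h1 : eLpNorm (⇑F) p μ01 = ENNReal.ofReal ‖F‖ := by
      rw [Lp.norm_def, ENNReal.ofReal_toReal (Lp.eLpNorm_ne_top F)]
    rw [h1]
    exact ENNReal.ofReal_le_ofReal hF.le
  have cheb := meas_ge_le_mul_pow_eLpNorm_enorm μ01 hp0 hp' (Lp.aestronglyMeasurable F)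
    (ε := ENNReal.ofReal 4⁻¹) (by simp) (by simp)
  have hset : {x | ENNReal.ofReal 4⁻¹ ≤ ‖(F : ℝ → ℂ) x‖ₑ} = {x | 4⁻¹ ≤ ‖(F : ℝ → ℂ) x‖} := by
    ext x
    simp only [mem_setOf_eq, ← ofReal_norm]
    rw [ENNReal.ofReal_le_ofReal_iff (norm_nonneg _)]
  rw [hset] at cheb
  refine cheb.trans ?_
  have hinv : (ENNReal.ofReal 4⁻¹)⁻¹ = ENNReal.ofReal 4 := by
    rw [← ENNReal.ofReal_inv_of_pos (by norm_num)]
    norm_num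
  calc (ENNReal.ofReal 4⁻¹)⁻¹ ^ p.toReal * eLpNorm (⇑F) p μ01 ^ p.toReal
      ≤ (ENNReal.ofReal 4) ^ p.toReal * (ENNReal.ofReal 32⁻¹) ^ p.toReal := by
        rw [hinv]
        exact mul_le_mul_right (ENNReal.rpow_le_rpow heLp (by linarith)) _
    _ = (ENNReal.ofReal 4 * ENNReal.ofReal 32⁻¹) ^ p.toReal := by
        rw [ENNReal.mul_rpow_of_nonneg _ _ (by linarith)]
    _ = (ENNReal.ofReal 8⁻¹) ^ p.toReal := by
        rw [← ENNReal.ofReal_mul (by norm_num)]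
        norm_num
    _ ≤ (ENNReal.ofReal 8⁻¹) ^ (1 : ℝ) := by
        apply ENNReal.rpow_le_rpow_of_exponent_ge _ hpT
        calc ENNReal.ofReal 8⁻¹ ≤ ENNReal.ofReal 1 :=
            ENNReal.ofReal_le_ofReal (by norm_num)
          _ = 1 := ENNReal.ofReal_one
    _ = ENNReal.ofReal 8⁻¹ := ENNReal.rpow_one _

/-! ### Auxiliary material: iterates of the weighted translation operator -/

/-- The weight of the `n`-th iterate of the weighted translation operator. -/
noncomputable def Wt (φ : ℝ → ℝ) (α : ℝ) : ℕ → ℝ → ℝ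
  | 0, _ => 1
  | n + 1, x => φ x * Wt φ α n (Int.fract (x + α))

lemma Wt_zero (φ : ℝ → ℝ) (α : ℝ) (x : ℝ) : Wt φ α 0 x = 1 := rfl

lemma Wt_succ (φ : ℝ → ℝ) (α : ℝ) (n : ℕ) (x : ℝ) :
    Wt φ α (n + 1) x = φ x * Wt φ α n (Int.fract (x + α)) := rfl

lemma Wt_nonneg {φ : ℝ → ℝ} {α : ℝ} (hφ : ∀ x ∈ Icc (0:ℝ) 1, 0 ≤ φ x) :
    ∀ n, ∀ x ∈ Icc (0:ℝ) 1, 0 ≤ Wt φ α n x := by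
  intro n
  induction n with
  | zero => intro x _; rw [Wt_zero]; norm_num
  | succ n ih =>
    intro x hx
    have hx' : Int.fract (x + α) ∈ Icc (0:ℝ) 1 :=
      ⟨Int.fract_nonneg _, (Int.fract_lt_one _).le⟩
    exact mul_nonneg (hφ x hx) (ih _ hx')

lemma iter_formula {p : ℝ≥0∞} [Fact (1 ≤ p)] {φ : ℝ → ℝ} {α : ℝ}
    {T : Lp ℂ p μ01 →L[ℂ] Lp ℂ p μ01}
    (hT : IsWTOp p (fun x => Complex.ofReal (φ x)) α T) (f : Lp ℂ p μ01) :
    ∀ n : ℕ, ∀ᵐ x ∂μ01, ((T ^ n) f) x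
      = (Wt φ α n x : ℂ) * f (Int.fract (x + n * α)) := by
  intro n
  induction n with
  | zero =>
    filter_upwards [ae_mem_Ico01] with x hx
    simp only [pow_zero, ContinuousLinearMap.one_apply, Wt_zero, Complex.ofReal_one, one_mul,
      Nat.cast_zero, zero_mul, add_zero]
    rw [Int.fract_eq_self.2 ⟨hx.1, hx.2⟩]
  | succ n ih =>
    have h1 := hT ((T ^ n) f)
    have h2 := (fract_add_mp α).quasiMeasurePreserving.tendsto_ae.eventually ih
    filter_upwards [h1, h2] with x hx1 hx2
    have hpow : (T ^ (n + 1)) f = T ((T ^ n) f) := by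
      rw [pow_succ', ContinuousLinearMap.mul_apply]
    rw [hpow, hx1, hx2, fract_fract_add]
    have harg : x + α + n * α = x + (n + 1 : ℕ) * α := by push_cast; ring
    rw [harg]
    rw [Wt_succ]
    push_cast
    ring

/-- Let `φ : [0,1] → ℝ` be bounded, increasing and convex with `φ(0) = 0`.
For every `α ∈ [0,1]` and `1 < p < ∞`, the weighted translation operator `T_{φ,α}`
on `L^p([0,1])` is not supercyclic. -/
theorem weighted_translation_not_supercyclic
    (φ : ℝ → ℝ) (hbdd : ∃ M : ℝ, ∀ x ∈ Set.Icc (0 : ℝ) 1, |φ x| ≤ M)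
    (hmono : StrictMonoOn φ (Set.Icc 0 1)) (hconv : ConvexOn ℝ (Set.Icc 0 1) φ)
    (h0 : φ 0 = 0)
    (α : ℝ) (hα : α ∈ Set.Icc (0 : ℝ) 1)
    (p : ℝ≥0∞) [Fact (1 ≤ p)] (hp : 1 < p) (hp' : p ≠ ∞)
    (T : Lp ℂ p μ01 →L[ℂ] Lp ℂ p μ01)
    (hT : IsWTOp p (fun x => Complex.ofReal (φ x)) α T) :
    ¬ ∃ f : Lp ℂ p μ01,
      Dense {g : Lp ℂ p μ01 | ∃ (c : ℂ) (n : ℕ), c • (T ^ n) f = g} := by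
  rintro ⟨f, hdense⟩
  -- φ is nonnegative on [0,1]
  have hφ0 : ∀ x ∈ Icc (0:ℝ) 1, 0 ≤ φ x := by
    intro x hx
    rcases eq_or_lt_of_le hx.1 with h | h
    · rw [← h, h0]
    · have := hmono (left_mem_Icc.2 zero_le_one) hx h
      rw [h0] at this
      exact this.le
  have hWt : ∀ n, ∀ x ∈ Icc (0:ℝ) 1, 0 ≤ Wt φ α n x := Wt_nonneg hφ0
  have hmeasf : Measurable (f : ℝ → ℂ) := (Lp.stronglyMeasurable f).measurable
  -- the two target functions
  have hs_half : μ01 (Icc (0:ℝ) 2⁻¹) = ENNReal.ofReal 2⁻¹ := by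
    rw [show μ01 = volume.restrict (Set.Icc 0 1) from rfl,
      Measure.restrict_apply measurableSet_Icc,
      Set.inter_eq_left.2 (Icc_subset_Icc le_rfl (by norm_num)), Real.volume_Icc]
    norm_num
  have hs_half' : μ01 (Ioc (2⁻¹:ℝ) 1) = ENNReal.ofReal 2⁻¹ := by
    rw [show μ01 = volume.restrict (Set.Icc 0 1) from rfl,
      Measure.restrict_apply measurableSet_Ioc,
      Set.inter_eq_left.2 (Set.Ioc_subset_Icc_self.trans (Set.Icc_subset_Icc (by norm_num)
        le_rfl)), Real.volume_Ioc]
    norm_num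
  set g1 : Lp ℂ p μ01 := indicatorConstLp p MeasurableSet.univ (measure_ne_top _ _) (1:ℂ)
    with hg1def
  set χ : Lp ℂ p μ01 := indicatorConstLp p measurableSet_Icc
    (by rw [hs_half]; exact ENNReal.ofReal_ne_top) (1:ℂ) with hχdef
  set g2 : Lp ℂ p μ01 := (2:ℂ) • χ - g1 with hg2def
  -- first approximation
  obtain ⟨G1, hG1S, hd1⟩ := Metric.mem_closure_iff.1 (hdense g1) 32⁻¹ (by norm_num)
  obtain ⟨c, n, rfl⟩ := hG1S
  obtain ⟨G2, hG2S, hd2⟩ := Metric.mem_closure_iff.1 (hdense g2) 32⁻¹ (by norm_num)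
  obtain ⟨c', m, rfl⟩ := hG2S
  set F1 : Lp ℂ p μ01 := c • (T ^ n) f - g1 with hF1def
  set F2 : Lp ℂ p μ01 := c' • (T ^ m) f - g2 with hF2def
  have hF1 : ‖F1‖ < 32⁻¹ := by
    rw [hF1def, ← dist_eq_norm, dist_comm]
    exact hd1
  have hF2 : ‖F2‖ < 32⁻¹ := by
    rw [hF2def, ← dist_eq_norm, dist_comm]
    exact hd2
  set B1 := {x | 4⁻¹ ≤ ‖(F1 : ℝ → ℂ) x‖} with hB1def
  set B2 := {x | 4⁻¹ ≤ ‖(F2 : ℝ → ℂ) x‖} with hB2def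
  have hB1 : μ01 B1 ≤ ENNReal.ofReal 8⁻¹ := cheb_small hp hp' F1 hF1
  have hB2 : μ01 B2 ≤ ENNReal.ofReal 8⁻¹ := cheb_small hp hp' F2 hF2
  -- the three sector sets
  set A : Set ℝ := (fun y => c * (f : ℝ → ℂ) y) ⁻¹' {z | InK z} with hAdef
  set Ap : Set ℝ := (fun y => c' * (f : ℝ → ℂ) y) ⁻¹' {z | InK z} with hApdef
  set An : Set ℝ := (fun y => -(c' * (f : ℝ → ℂ) y)) ⁻¹' {z | InK z} with hAndef
  have hAmeas : MeasurableSet A :=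
    (measurable_const.mul hmeasf) InK_measurableSet
  set Rn : ℝ → ℝ := fun x => Int.fract (x + (n : ℝ) * α) with hRndef
  set Rm : ℝ → ℝ := fun x => Int.fract (x + (m : ℝ) * α) with hRmdef
  -- step 1 : outside B1, the value c * f (Rn x) lies in the sector
  have key1 : (Rn ⁻¹' Aᶜ : Set ℝ) ≤ᵐ[μ01] B1 := by
    filter_upwards [iter_formula hT f n, Lp.coeFn_sub (c • (T ^ n) f) g1,
      Lp.coeFn_smul c ((T ^ n) f), indicatorConstLp_coeFn (μ := μ01) (p := p)
        (hs := MeasurableSet.univ) (hμs := measure_ne_top _ _) (c := (1:ℂ)),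
      ae_mem_Icc01] with x hx1 hx2 hx3 hx4 hx5
    intro hxpre
    by_contra hxB
    apply hxpre
    have hnorm : ‖(F1 : ℝ → ℂ) x‖ < 4⁻¹ := not_le.1 hxB
    have hval : (F1 : ℝ → ℂ) x
        = (Wt φ α n x : ℂ) * (c * (f : ℝ → ℂ) (Int.fract (x + (n : ℝ) * α))) - 1 := by
      rw [hx2]
      simp only [Pi.sub_apply]
      rw [hx3]
      simp only [Pi.smul_apply, smul_eq_mul]
      rw [hx1, hx4]
      simp only [Set.indicator_univ]
      ring
    rw [hval] at hnorm
    exact InK_of_close (hWt n x hx5) hnorm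
  have hA : μ01 Aᶜ ≤ ENNReal.ofReal 8⁻¹ := by
    rw [← (fract_add_mp ((n : ℝ) * α)).measure_preimage
      hAmeas.compl.nullMeasurableSet]
    exact le_trans (measure_mono_ae key1) hB1
  -- step 2 : on [0,1/2] (resp. (1/2,1]) and outside B2, the value c' * f (Rm x) lies in K (resp. -K)
  have hg2coe : ∀ᵐ x ∂μ01, (g2 : ℝ → ℂ) x
      = 2 * (Icc (0:ℝ) 2⁻¹).indicator (fun _ => (1:ℂ)) x - 1 := by
    filter_upwards [Lp.coeFn_sub ((2:ℂ) • χ) g1, Lp.coeFn_smul (2:ℂ) χ,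
      indicatorConstLp_coeFn (μ := μ01) (p := p) (hs := MeasurableSet.univ)
        (hμs := measure_ne_top _ _) (c := (1:ℂ)),
      indicatorConstLp_coeFn (μ := μ01) (p := p) (hs := measurableSet_Icc (a := (0:ℝ))
        (b := 2⁻¹)) (hμs := by rw [hs_half]; exact ENNReal.ofReal_ne_top) (c := (1:ℂ))]
      with x hx1 hx2 hx3 hx4
    rw [hg2def]
    calc ((2:ℂ) • χ - g1 : Lp ℂ p μ01) x
        = ((2:ℂ) • χ : Lp ℂ p μ01) x - (g1 : ℝ → ℂ) x := by rw [hx1]; rfl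
      _ = 2 * (χ : ℝ → ℂ) x - 1 := by rw [hx3, hx2]; simp [Set.indicator_univ]
      _ = 2 * (Icc (0:ℝ) 2⁻¹).indicator (fun _ => (1:ℂ)) x - 1 := by rw [hx4]
  have key2 : ∀ᵐ x ∂μ01, ((F2 : ℝ → ℂ) x
      = (Wt φ α m x : ℂ) * (c' * (f : ℝ → ℂ) (Int.fract (x + (m : ℝ) * α)))
        - (2 * (Icc (0:ℝ) 2⁻¹).indicator (fun _ => (1:ℂ)) x - 1)) ∧ x ∈ Icc (0:ℝ) 1 := by
    filter_upwards [iter_formula hT f m, Lp.coeFn_sub (c' • (T ^ m) f) g2,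
      Lp.coeFn_smul c' ((T ^ m) f), hg2coe, ae_mem_Icc01] with x hx1 hx2 hx3 hx4 hx5
    refine ⟨?_, hx5⟩
    rw [hx2]
    simp only [Pi.sub_apply]
    rw [hx3]
    simp only [Pi.smul_apply, smul_eq_mul]
    rw [hx1, hx4]
    ring
  have key2p : (Icc (0:ℝ) 2⁻¹ : Set ℝ) ≤ᵐ[μ01] (B2 ∪ (Rm ⁻¹' Ap) : Set ℝ) := by
    filter_upwards [key2] with x hx
    intro hxs
    have hxs' : x ∈ Icc (0:ℝ) 2⁻¹ := hxs
    by_cases hxB : x ∈ B2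
    · exact Or.inl hxB
    · refine Or.inr ?_
      have hnorm : ‖(F2 : ℝ → ℂ) x‖ < 4⁻¹ := not_le.1 hxB
      rw [hx.1, Set.indicator_of_mem hxs'] at hnorm
      have : ‖(Wt φ α m x : ℂ) * (c' * (f : ℝ → ℂ) (Int.fract (x + (m : ℝ) * α))) - 1‖
          < 4⁻¹ := by
        convert hnorm using 3
        norm_num
      exact InK_of_close (hWt m x hx.2) this
  have key2n : (Ioc (2⁻¹:ℝ) 1 : Set ℝ) ≤ᵐ[μ01] (B2 ∪ (Rm ⁻¹' An) : Set ℝ) := by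
    filter_upwards [key2] with x hx
    intro hxs
    have hxs' : x ∈ Ioc (2⁻¹:ℝ) 1 := hxs
    by_cases hxB : x ∈ B2
    · exact Or.inl hxB
    · refine Or.inr ?_
      have hnorm : ‖(F2 : ℝ → ℂ) x‖ < 4⁻¹ := not_le.1 hxB
      have hnotmem : x ∉ Icc (0:ℝ) 2⁻¹ := fun h => absurd hxs'.1 (not_lt.2 h.2)
      rw [hx.1, Set.indicator_of_notMem hnotmem] at hnorm
      have : ‖(Wt φ α m x : ℂ) * (c' * (f : ℝ → ℂ) (Int.fract (x + (m : ℝ) * α))) - (-1)‖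
          < 4⁻¹ := by
        convert hnorm using 3
        norm_num
      exact InK_of_close_neg (hWt m x hx.2) this
  -- measure bounds
  have hQ : μ01 (Rm ⁻¹' Aᶜ) ≤ ENNReal.ofReal 8⁻¹ := by
    rw [(fract_add_mp ((m : ℝ) * α)).measure_preimage hAmeas.compl.nullMeasurableSet]
    exact hA
  have hcontra : ∀ S : Set ℝ, μ01 (Rm ⁻¹' S ∩ Rm ⁻¹' A) = 0 →
      ¬ (ENNReal.ofReal 2⁻¹ ≤ μ01 B2 + μ01 (Rm ⁻¹' S)) := by
    intro S hS0 hle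
    have hsub : Rm ⁻¹' S ⊆ (Rm ⁻¹' S ∩ Rm ⁻¹' A) ∪ Rm ⁻¹' Aᶜ := by
      intro x hx
      by_cases hxA : x ∈ Rm ⁻¹' A
      · exact Or.inl ⟨hx, hxA⟩
      · exact Or.inr hxA
    have hSmeas : μ01 (Rm ⁻¹' S) ≤ ENNReal.ofReal 8⁻¹ := by
      calc μ01 (Rm ⁻¹' S) ≤ μ01 ((Rm ⁻¹' S ∩ Rm ⁻¹' A) ∪ Rm ⁻¹' Aᶜ) := measure_mono hsub
        _ ≤ μ01 (Rm ⁻¹' S ∩ Rm ⁻¹' A) + μ01 (Rm ⁻¹' Aᶜ) := measure_union_le _ _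
        _ = μ01 (Rm ⁻¹' Aᶜ) := by rw [hS0, zero_add]
        _ ≤ ENNReal.ofReal 8⁻¹ := hQ
    have : ENNReal.ofReal 2⁻¹ ≤ ENNReal.ofReal 8⁻¹ + ENNReal.ofReal 8⁻¹ :=
      hle.trans (add_le_add hB2 hSmeas)
    rw [← ENNReal.ofReal_add (by norm_num) (by norm_num)] at this
    rw [ENNReal.ofReal_le_ofReal_iff (by norm_num)] at this
    norm_num at this
  -- extract the two points
  have hp1 : (Rm ⁻¹' Ap ∩ Rm ⁻¹' A).Nonempty := by
    rcases Set.eq_empty_or_nonempty (Rm ⁻¹' Ap ∩ Rm ⁻¹' A) with h | h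
    · exfalso
      refine hcontra Ap (by rw [h]; exact measure_empty) ?_
      calc ENNReal.ofReal 2⁻¹ = μ01 (Icc (0:ℝ) 2⁻¹) := hs_half.symm
        _ ≤ μ01 (B2 ∪ Rm ⁻¹' Ap) := measure_mono_ae key2p
        _ ≤ μ01 B2 + μ01 (Rm ⁻¹' Ap) := measure_union_le _ _
    · exact h
  have hp2 : (Rm ⁻¹' An ∩ Rm ⁻¹' A).Nonempty := by
    rcases Set.eq_empty_or_nonempty (Rm ⁻¹' An ∩ Rm ⁻¹' A) with h | h
    · exfalso
      refine hcontra An (by rw [h]; exact measure_empty) ?_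
      calc ENNReal.ofReal 2⁻¹ = μ01 (Ioc (2⁻¹:ℝ) 1) := hs_half'.symm
        _ ≤ μ01 (B2 ∪ Rm ⁻¹' An) := measure_mono_ae key2n
        _ ≤ μ01 B2 + μ01 (Rm ⁻¹' An) := measure_union_le _ _
    · exact h
  obtain ⟨x1, hx1p, hx1A⟩ := hp1
  obtain ⟨x2, hx2n, hx2A⟩ := hp2
  exact sector_contradiction hx1A hx1p hx2A hx2n
end
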